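/- For m an odd positive integer, there exist no integers j, a, b with 0 ≤ j < m, a ≡ m (mod 2), b ≡ 1 (mod 2), satisfying ((2j - m)^2 - m)/(4m) + (-m^2 b^2 - 4abm - 4a^2)/(4m(m+4)) = (m - 5)/4. -/

import Mathlib

/-- For `m` an odd positive integer there are no integers `j, a, b` with
`0 ≤ j < m`, `a ≡ m (mod 2)`, `b ≡ 1 (mod 2)` satisfying the grading equation
`((2j-m)² - m)/(4m) + (-m²b² - 4abm - 4a²)/(4m(m+4)) = (m-5)/4`. -/
theorem grading_obstruction (m : ℤ) (hpos : 0 < m) (hodd : Odd m) :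
    ¬ ∃ j a b : ℤ, 0 ≤ j ∧ j < m ∧ a ≡ m [ZMOD 2] ∧ b ≡ 1 [ZMOD 2] ∧
      (((2 * j - m) ^ 2 - m : ℚ)) / (4 * m) +
        ((-(m : ℚ) ^ 2 * b ^ 2 - 4 * a * b * m - 4 * a ^ 2)) / (4 * m * (m + 4)) =
        ((m : ℚ) - 5) / 4 := by
  rintro ⟨j, a, b, hj0, hjm, ha, hb, heq⟩
  have hm : (m : ℚ) ≠ 0 := by positivity
  have hm4 : (m : ℚ) + 4 ≠ 0 := by positivity
  field_simp at heq
  have hZ : (((2*j-m)^2-m)*(4*m*(m+4)) + (-(m^2*b^2)-4*a*b*m-4*a^2)*(4*m))*4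
      = (m-5)*(4*m*(4*m*(m+4))) := by qify; linear_combination (16*(m:ℚ)) * heq
  have hX : (16*m) * ((m+4)*((2*j-m)^2 - m) + (-(m^2*b^2) - 4*a*b*m - 4*a^2))
      = (16*m) * ((m-5)*(m*(m+4))) := by linear_combination hZ
  have hXY := mul_left_cancel₀ (mul_ne_zero (by norm_num) (by omega) : (16*m:ℤ) ≠ 0) hX
  obtain ⟨k, hk⟩ : ∃ k, m = 4*k+1 ∨ m = 4*k+3 :=
    ⟨m/4, by obtain ⟨t, ht⟩ := hodd; omega⟩
  obtain ⟨l, hl⟩ : ∃ l, b = 2*l+1 :=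
    ⟨b/2, by have := hb; simp [Int.ModEq] at this; omega⟩
  have h4 := congrArg (fun x : ℤ => (x : ZMod 4)) hXY
  rcases hk with hk | hk <;>
    rw [hk, hl] at h4 <;> push_cast at h4 <;> revert h4 <;>
    generalize (j : ZMod 4) = J <;> generalize (k : ZMod 4) = K <;>
    generalize (l : ZMod 4) = L <;> generalize (a : ZMod 4) = A <;>
    revert J K L A <;> decide
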